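/- For all n ≥ 2 and all i with 1 ≤ i ≤ ⌊n/2⌋, the number of permutations τ of length n with a bifix of length i, i.e., with τ[1,i] = τ[n−i+1,n], equals n!/i!. -/

import Mathlib

open scoped Classical

noncomputable section

/-- A permutation of length `n`, written in one-line notation as `τ 0, τ 1, …, τ (n-1)`. -/
abbrev Perm' (n : ℕ) := Equiv.Perm (Fin n)

/-- `σ` occurs in `τ` as a consecutive pattern at (0-indexed) starting position `i`:
the window `τ i, …, τ (i+m-1)` of adjacent entries is in the same relative order as `σ`. -/
def OccursAt {m n : ℕ} (σ : Perm' m) (τ : Perm' n) (i : ℕ) : Prop :=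
  ∃ h : i + m ≤ n, ∀ a b : Fin m,
    σ a < σ b ↔
      τ ⟨i + a, by have := a.isLt; omega⟩ < τ ⟨i + b, by have := b.isLt; omega⟩

/-- Consecutive pattern containment `σ ≤ τ`. -/
def PattLE {m n : ℕ} (σ : Perm' m) (τ : Perm' n) : Prop :=
  ∃ i, OccursAt σ τ i

/-- Permutations of arbitrary length: the carrier of the consecutive pattern poset. -/
abbrev PermS : Type := Σ n : ℕ, Perm' n

/-- The order of the consecutive pattern poset. -/
def pLE (p q : PermS) : Prop := PattLE p.2 q.2

/-- The strict order of the consecutive pattern poset. -/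
def pLT (p q : PermS) : Prop := pLE p q ∧ p ≠ q

/-- The covering relation of the consecutive pattern poset. -/
def pCovBy (p q : PermS) : Prop :=
  pLT p q ∧ ∀ r : PermS, pLT p r → pLT r q → False

/-- The open interval `(p,q)` in the consecutive pattern poset. -/
def openInterval (p q : PermS) : Set PermS := {r | pLT p r ∧ pLT r q}

/-- The Hasse diagram of the open interval `(p,q)`: vertices are the permutations strictly
between `p` and `q`, edges are the covering relations of the consecutive pattern poset. -/
def hasse (p q : PermS) : SimpleGraph (openInterval p q) :=
  SimpleGraph.fromRel fun a b => pCovBy a.1 b.1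

/-- The interval `[p,q]` is disconnected if the Hasse diagram of `(p,q)` is not connected. -/
def IntervalDisconnected (p q : PermS) : Prop := ¬ (hasse p q).Connected

/-- `window τ i m` is the reduction of the window of `τ` of length `m` starting at
(0-indexed) position `i`, i.e. the pattern `τ[i+1, i+m]` in 1-indexed notation. -/
def window {n : ℕ} (τ : Perm' n) (i m : ℕ) : Perm' m :=
  if h : i + m ≤ n then
    (Tuple.sort fun a : Fin m => τ ⟨i + a, by have := a.isLt; omega⟩)⁻¹
  else 1

/-- `τ` is monotone, i.e. equal to `12…n` or `n…21`. -/
def IsMonotone {n : ℕ} (τ : Perm' n) : Prop :=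
  (∀ a b : Fin n, a ≤ b → τ a ≤ τ b) ∨ (∀ a b : Fin n, a ≤ b → τ b ≤ τ a)

/-- `τ` has a bifix (a common proper prefix and proper suffix) of length `k`. -/
def HasBifixLen {n : ℕ} (τ : Perm' n) (k : ℕ) : Prop :=
  0 < k ∧ k < n ∧ window τ 0 k = window τ (n - k) k

/-- The length `|x(τ)|` of the exterior of `τ`, the longest bifix of `τ`. -/
def extLen {n : ℕ} (τ : Perm' n) : ℕ := Nat.findGreatest (HasBifixLen τ) n

/-- The exterior `x(τ)` of `τ`: its longest bifix. -/
def extPerm {n : ℕ} (τ : Perm' n) : Perm' (extLen τ) := window τ 0 (extLen τ)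

/-- The interior `i(τ) = τ[2,n-1]` of `τ`. -/
def intPerm {n : ℕ} (τ : Perm' n) : Perm' (n - 2) := window τ 1 (n - 2)

/-- `p` straddles `q`: `p < q`, `p` is both a prefix and a suffix of `q`,
and `p` has no other occurrence in `q`. -/
def Straddles (p q : PermS) : Prop :=
  pLT p q ∧ OccursAt p.2 q.2 0 ∧ OccursAt p.2 q.2 (q.1 - p.1) ∧
    ∀ i, OccursAt p.2 q.2 i → i = 0 ∨ i = q.1 - p.1

/-- The interval `[p,q]` contains a non-trivial disconnected subinterval, i.e. a
subinterval `[a,b]` of rank at least 3 which is disconnected. -/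
def HasNontrivDisconSub (p q : PermS) : Prop :=
  ∃ a b : PermS, pLE p a ∧ pLE a b ∧ pLE b q ∧ a.1 + 3 ≤ b.1 ∧ IntervalDisconnected a b

/-- The finite set of all permutations of length at most `N`. -/
def permsUpTo (N : ℕ) : Finset PermS :=
  (Finset.range (N + 1)).sigma fun n => (Finset.univ : Finset (Perm' n))

/-- The closed interval `[p,q]` of the consecutive pattern poset, as a finite set. -/
def intervalF (p q : PermS) : Finset PermS :=
  (permsUpTo q.1).filter fun r => pLE p r ∧ pLE r q

/-- The number of elements of the interval `[σ,τ]` of rank `r`, i.e. of length `|σ| + r`. -/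
def rankCard {m n : ℕ} (σ : Perm' m) (τ : Perm' n) (r : ℕ) : ℕ :=
  ((permsUpTo n).filter fun p => pLE ⟨m, σ⟩ p ∧ pLE p ⟨n, τ⟩ ∧ p.1 = m + r).card

/-- The direct sum `σ ⊕ π` of two permutations. -/
def dsum {m k : ℕ} (σ : Perm' m) (π : Perm' k) : Perm' (m + k) :=
  finSumFinEquiv.permCongr (σ.sumCongr π)


/-- generic: inverse of sort compares like f -/
lemma sortInv_lt_iff {m : ℕ} {α : Type*} [LinearOrder α] (f : Fin m → α)
    (hinj : Function.Injective f) (a b : Fin m) :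
    (Tuple.sort f)⁻¹ a < (Tuple.sort f)⁻¹ b ↔ f a < f b := by
  have hsm : StrictMono (f ∘ Tuple.sort f) :=
    (Tuple.monotone_sort f).strictMono_of_injective (hinj.comp (Tuple.sort f).injective)
  have h2 : f a < f b ↔ (f ∘ Tuple.sort f) ((Tuple.sort f)⁻¹ a) <
      (f ∘ Tuple.sort f) ((Tuple.sort f)⁻¹ b) := by
    simp [Function.comp]
  rw [h2, hsm.lt_iff_lt]

lemma perm_eq_of_lt_iff {m : ℕ} (ρ σ : Perm' m)
    (h : ∀ a b, ρ a < ρ b ↔ σ a < σ b) : ρ = σ := by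
  have hsm : StrictMono (σ ∘ ρ.symm) := by
    intro a b hab
    have := (h (ρ.symm a) (ρ.symm b)).mp (by simpa using hab)
    simpa using this
  have hsurj : Function.Surjective (σ ∘ ρ.symm) :=
    σ.surjective.comp ρ.symm.surjective
  have : (StrictMono.orderIsoOfSurjective _ hsm hsurj) = OrderIso.refl (Fin m) :=
    Subsingleton.elim _ _
  apply Equiv.ext; intro x
  have hx := congrArg (fun e : Fin m ≃o Fin m => e (ρ x)) this
  simpa using hx.symm

lemma window_lt_iff {n m j : ℕ} (τ : Perm' n) (h : j + m ≤ n) (a b : Fin m) :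
    window τ j m a < window τ j m b ↔
      τ ⟨j + a, by have := a.isLt; omega⟩ < τ ⟨j + b, by have := b.isLt; omega⟩ := by
  unfold window
  rw [dif_pos h]
  exact sortInv_lt_iff _ (fun x y hxy => by
    have := τ.injective hxy
    simp only [Fin.mk.injEq] at this
    exact Fin.ext (by omega)) a b

lemma window_unique {n m j : ℕ} (τ : Perm' n) (h : j + m ≤ n) (σ : Perm' m)
    (hσ : ∀ a b : Fin m, σ a < σ b ↔
      τ ⟨j + a, by have := a.isLt; omega⟩ < τ ⟨j + b, by have := b.isLt; omega⟩) :
    window τ j m = σ :=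
  perm_eq_of_lt_iff _ _ (fun a b => (window_lt_iff τ h a b).trans (hσ a b).symm)


/-- from the proof of Lemma 6.4: for `n ≥ 2` and `1 ≤ i ≤ ⌊n/2⌋`, the
number of permutations `τ` of length `n` with `τ[1,i] = τ[n-i+1,n]` is `n!/i!`. -/
theorem stmt19 {n : ℕ} (hn : 2 ≤ n) (i : ℕ) (hi1 : 1 ≤ i) (hi2 : i ≤ n / 2) :
    (Finset.univ.filter fun τ : Perm' n => window τ 0 i = window τ (n - i) i).card =
      Nat.factorial n / Nat.factorial i := by
  have hin : i ≤ n - i := by omega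
  have hni : (n - i) + i ≤ n := by omega
  have h0i : 0 + i ≤ n := by omega
  set e : Fin i ↪ Fin n := ⟨fun a => ⟨n - i + a, by have := a.isLt; omega⟩,
    fun a b hab => by
      simp only [Fin.mk.injEq] at hab; exact Fin.ext (by omega)⟩ with he
  have hom : ∀ g h : Perm' i,
      (g.viaFintypeEmbedding e) * (h.viaFintypeEmbedding e) = (g * h).viaFintypeEmbedding e := by
    intro g h
    simp [Equiv.Perm.viaFintypeEmbedding, ← Equiv.Perm.extendDomain_mul]
  have hone : ((1 : Perm' i).viaFintypeEmbedding e) = 1 := by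
    simp [Equiv.Perm.viaFintypeEmbedding]
  have hfix : ∀ (g : Perm' i) (x : Fin n), (x : ℕ) < n - i → g.viaFintypeEmbedding e x = x := by
    intro g x hx
    apply Equiv.Perm.viaFintypeEmbedding_apply_notMem_range
    rintro ⟨a, rfl⟩
    simp only [he, Function.Embedding.coeFn_mk] at hx
    change n - i + (a : ℕ) < n - i at hx
    omega
  have happ0 : ∀ (τ : Perm' n) (g : Perm' i) (a : Fin i),
      (τ * g.viaFintypeEmbedding e) ⟨0 + a, by have := a.isLt; omega⟩ =
        τ ⟨0 + a, by have := a.isLt; omega⟩ := by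
    intro τ g a
    rw [Equiv.Perm.mul_apply, hfix]
    have := a.isLt
    simp only []
    omega
  have happ1 : ∀ (τ : Perm' n) (g : Perm' i) (a : Fin i),
      (τ * g.viaFintypeEmbedding e) ⟨n - i + a, by have := a.isLt; omega⟩ =
        τ ⟨n - i + g a, by have := (g a).isLt; omega⟩ := by
    intro τ g a
    rw [Equiv.Perm.mul_apply]
    have : (⟨n - i + a, by have := a.isLt; omega⟩ : Fin n) = e a := rfl
    rw [this, Equiv.Perm.viaFintypeEmbedding_apply_image]
    rfl
  have hw0 : ∀ (τ : Perm' n) (g : Perm' i),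
      window (τ * g.viaFintypeEmbedding e) 0 i = window τ 0 i := by
    intro τ g
    apply window_unique _ h0i
    intro a b
    rw [window_lt_iff τ h0i a b, happ0, happ0]
  have hw1 : ∀ (τ : Perm' n) (g : Perm' i),
      window (τ * g.viaFintypeEmbedding e) (n - i) i = window τ (n - i) i * g := by
    intro τ g
    apply window_unique _ hni
    intro a b
    rw [happ1, happ1, Equiv.Perm.mul_apply, Equiv.Perm.mul_apply,
      window_lt_iff τ hni (g a) (g b)]
  set Φ : ({τ : Perm' n // window τ 0 i = window τ (n - i) i} × Perm' i) → Perm' n :=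
    fun p => p.1.1 * p.2.viaFintypeEmbedding e with hΦdef
  have key : ∀ (τ : Perm' n), window τ 0 i = window τ (n - i) i → ∀ (g : Perm' i),
      window (τ * g.viaFintypeEmbedding e) (n - i) i =
        window (τ * g.viaFintypeEmbedding e) 0 i * g := by
    intro τ hτ g; rw [hw1, hw0, hτ]
  have hbij : Function.Bijective Φ := by
    constructor
    · rintro ⟨⟨τ₁, h₁⟩, g₁⟩ ⟨⟨τ₂, h₂⟩, g₂⟩ hΦ
      simp only [hΦdef] at hΦ
      have e1 := key τ₁ h₁ g₁
      have e2 := key τ₂ h₂ g₂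
      rw [hΦ] at e1
      rw [e2] at e1
      have hg : g₁ = g₂ := (mul_left_cancel e1.symm)
      subst hg
      have hτ : τ₁ = τ₂ := mul_right_cancel hΦ
      simp [Prod.ext_iff, Subtype.ext_iff, hτ]
    · intro σ
      refine ⟨⟨⟨σ * (((window σ 0 i)⁻¹ * window σ (n - i) i)⁻¹).viaFintypeEmbedding e, ?_⟩,
        (window σ 0 i)⁻¹ * window σ (n - i) i⟩, ?_⟩
      · rw [hw0, hw1]
        group
      · simp only [hΦdef, mul_assoc, hom]
        rw [inv_mul_cancel, hone, mul_one]
  have hcard := Fintype.card_of_bijective hbij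
  rw [Fintype.card_prod, Fintype.card_subtype] at hcard
  have hfact : ∀ k : ℕ, Fintype.card (Perm' k) = Nat.factorial k := by
    intro k; rw [Fintype.card_perm, Fintype.card_fin]
  rw [hfact, hfact] at hcard
  rw [← hcard, Nat.mul_div_cancel _ (Nat.factorial_pos i)]


end
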